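/- Let N be a positive integer and D_m = y(1+y)d²/dy² + [1-(N-1)y]d/dy + m(N-m). If m is an integer with 0 ≤ m ≤ N, m ≠ N/2, and f is a polynomial of degree strictly less than max(m, N-m), then the unique formal power series solution u of D_m u = f with u(0) = 0 is a polynomial of degree at most max(m, N-m). -/

import Mathlib

open PowerSeries

/-- The differential operator `D_m = y(1+y) d²/dy² + [1-(N-1)y] d/dy + m(N-m)`
acting on formal power series over `ℚ`. -/
noncomputable def Dop (N m : ℕ) (u : PowerSeries ℚ) : PowerSeries ℚ :=
  (PowerSeries.X * (1 + PowerSeries.X)) *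
      (PowerSeries.derivative ℚ (PowerSeries.derivative ℚ u))
    + (1 - PowerSeries.C ((N : ℚ) - 1) * PowerSeries.X) * (PowerSeries.derivative ℚ u)
    + PowerSeries.C ((m : ℚ) * ((N : ℚ) - (m : ℚ))) * u


lemma coeff_Dop (N m : ℕ) (u : PowerSeries ℚ) (j : ℕ) :
    PowerSeries.coeff j (Dop N m u) =
      ((j:ℚ)+1)^2 * PowerSeries.coeff (j+1) u
        + ((j:ℚ)-m)*((j:ℚ)-((N:ℚ)-m)) * PowerSeries.coeff j u := by
  set a : ℚ := (N:ℚ) - 1 with ha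
  set b : ℚ := (m:ℚ) * ((N:ℚ) - (m:ℚ)) with hb
  have h : Dop N m u = PowerSeries.X * (PowerSeries.derivative ℚ (PowerSeries.derivative ℚ u))
      + PowerSeries.X * (PowerSeries.X * (PowerSeries.derivative ℚ (PowerSeries.derivative ℚ u)))
      + (PowerSeries.derivative ℚ u)
      - PowerSeries.C a * (PowerSeries.X * (PowerSeries.derivative ℚ u))
      + PowerSeries.C b * u := by
    rw [Dop]; ring
  rw [h]
  rcases j with _|j
  · simp only [map_add, map_sub, PowerSeries.coeff_zero_X_mul, PowerSeries.coeff_C_mul,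
      PowerSeries.coeff_derivative]
    rw [ha, hb]; push_cast; ring
  rcases j with _|j
  · simp only [map_add, map_sub, PowerSeries.coeff_succ_X_mul, PowerSeries.coeff_zero_X_mul,
      PowerSeries.coeff_C_mul, PowerSeries.coeff_derivative]
    rw [ha, hb]; push_cast; ring
  · simp only [map_add, map_sub, PowerSeries.coeff_succ_X_mul, PowerSeries.coeff_C_mul,
      PowerSeries.coeff_derivative]
    rw [ha, hb]; push_cast; ring

noncomputable def solFun (N m : ℕ) (f : PowerSeries ℚ) : ℕ → ℚ
  | 0 => 0
  | j+1 => (PowerSeries.coeff j f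
      - ((j:ℚ)-m)*((j:ℚ)-((N:ℚ)-m)) * solFun N m f j) / ((j:ℚ)+1)^2

lemma Dop_eq_iff (N m : ℕ) (u f : PowerSeries ℚ) :
    Dop N m u = f ↔ ∀ j : ℕ, ((j:ℚ)+1)^2 * PowerSeries.coeff (j+1) u
      = PowerSeries.coeff j f - ((j:ℚ)-m)*((j:ℚ)-((N:ℚ)-m)) * PowerSeries.coeff j u := by
  constructor
  · intro h j
    have := congrArg (PowerSeries.coeff j) h
    rw [coeff_Dop] at this
    linarith
  · intro h
    ext j
    rw [coeff_Dop]
    have := h j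
    linarith


/-- If `m ≠ N/2` and `f` is a polynomial of degree `< max(m, N-m)`, the unique formal power
series solution of `D_m u = f` with `u(0) = 0` is a polynomial of degree `≤ max(m, N-m)`. -/
theorem solution_polynomial_of_low_degree_source (N m : ℕ) (hN : 0 < N) (hm : m ≤ N)
    (hm2 : 2 * m ≠ N) (f : PowerSeries ℚ)
    (hf : ∀ j : ℕ, max m (N - m) ≤ j → PowerSeries.coeff j f = 0) :
    (∃! u : PowerSeries ℚ, Dop N m u = f ∧ PowerSeries.constantCoeff u = 0) ∧
      ∀ u : PowerSeries ℚ, Dop N m u = f → PowerSeries.constantCoeff u = 0 →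
        ∀ j : ℕ, max m (N - m) < j → PowerSeries.coeff j u = 0 := by
  have hpos : ∀ j : ℕ, ((j:ℚ)+1)^2 ≠ 0 := fun j => by positivity
  constructor
  · refine ⟨PowerSeries.mk (solFun N m f), ⟨?_, ?_⟩, ?_⟩
    · rw [Dop_eq_iff]
      intro j
      simp only [PowerSeries.coeff_mk]
      rw [solFun]
      field_simp
    · rw [PowerSeries.constantCoeff_mk]; rfl
    · rintro u ⟨hu, hu0⟩
      rw [Dop_eq_iff] at hu
      ext j
      induction j with
      | zero => simpa [solFun] using hu0
      | succ j ih =>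
        have := hu j
        simp only [PowerSeries.coeff_mk] at ih ⊢
        rw [solFun, ← ih]
        field_simp
        linarith
  · intro u hu hu0 j hj
    rw [Dop_eq_iff] at hu
    set M := max m (N - m) with hM
    -- the factor vanishes at j = M
    have hfac : ((M:ℚ)-m)*((M:ℚ)-((N:ℚ)-m)) = 0 := by
      rcases le_or_gt (N - m) m with h | h
      · have : M = m := max_eq_left h
        rw [this]; ring_nf
      · have hMe : M = N - m := max_eq_right h.le
        have : (M:ℚ) = (N:ℚ) - m := by
          rw [hMe]; push_cast [Nat.cast_sub hm]; ring
        rw [this]; ring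
    have key : ∀ k : ℕ, PowerSeries.coeff (M + 1 + k) u = 0 := by
      intro k
      induction k with
      | zero =>
        have h3 := hu M
        rw [hf M le_rfl, hfac, zero_mul, sub_zero] at h3
        rcases mul_eq_zero.mp h3 with h | h
        · exact absurd h (hpos M)
        · simpa using h
      | succ k ih =>
        have h3 := hu (M + 1 + k)
        rw [hf (M + 1 + k) (by omega), ih, mul_zero, zero_sub, neg_zero] at h3
        rcases mul_eq_zero.mp h3 with h | h
        · exact absurd h (hpos (M + 1 + k))
        · simpa [show M + 1 + (k+1) = M + 1 + k + 1 by ring] using h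
    obtain ⟨k, rfl⟩ : ∃ k, j = M + 1 + k := ⟨j - (M+1), by omega⟩
    exact key k
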